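/- Let K/F be cyclic Galois of prime degree p with Galois group ⟨σ⟩, and f(t) = t^m − Σ a_i t^i ∈ K[t;σ] not right invariant, with nonzero coefficient index set Λ. Then Nuc(S_f) = K if and only if p divides m − λ for every λ ∈ Λ; equivalently, Nuc(S_f) = F if and only if there exists λ ∈ Λ with p not dividing m − λ. -/

import Mathlib

open Polynomial

/-- Skew (twisted) multiplication on polynomials over `K`, representing the
multiplication of the twisted polynomial ring `K[t;σ]` with `t·a = σ(a)·t`:
`(a t^i)·(b t^j) = a σ^i(b) t^{i+j}`. -/
noncomputable def sMul {K : Type} [Field K] (σ : K ≃+* K) (p q : K[X]) : K[X] :=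
  p.sum fun i a => C a * (q.map ((σ ^ i : K ≃+* K) : K →+* K)) * X ^ i

/-- `f` is right invariant in `K[t;σ]`: `f·g ∈ R·f` for all `g`. -/
def RightInvariant {K : Type} [Field K] (σ : K ≃+* K) (f : K[X]) : Prop :=
  ∀ g : K[X], ∃ q : K[X], sMul σ f g = sMul σ q f

/-- Membership in the eigenring of `f`, i.e. the right nucleus of the Petit
algebra `S_f = K[t;σ]/K[t;σ]f` (for `f` not right invariant):
`{g | deg g < deg f ∧ f·g ∈ R·f}`. -/
def InEigenring {K : Type} [Field K] (σ : K ≃+* K) (f g : K[X]) : Prop :=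
  g.degree < f.degree ∧ ∃ q : K[X], sMul σ f g = sMul σ q f

/-- Remainder of right division by `f` in `K[t;σ]` (Petit multiplication in
`S_f` is `g ∘ h = (g·h) mod_r f`). -/
noncomputable def modRight {K : Type} [Field K] (σ : K ≃+* K) (f g : K[X]) : K[X] := by
  classical
  exact if h : ∃ r : K[X], r.degree < f.degree ∧ ∃ q : K[X], g = sMul σ q f + r
    then h.choose else 0

/- ### Auxiliary lemmas -/

lemma coeff_sMul_C {K : Type} [Field K] (σ : K ≃+* K) (f : K[X]) (d : K) (k : ℕ) :
    (sMul σ f (C d)).coeff k = f.coeff k * (σ ^ k : K ≃+* K) d := by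
  unfold sMul
  rw [Polynomial.sum, finset_sum_coeff]
  simp only [map_C, ← C_mul, coeff_C_mul_X_pow]
  rw [Finset.sum_ite_eq f.support k]
  by_cases h : k ∈ f.support
  · simp [h]
  · simp [h, notMem_support_iff.mp h]

lemma sMul_C_left {K : Type} [Field K] (σ : K ≃+* K) (c : K) (f : K[X]) :
    sMul σ (C c) f = C c * f := by
  unfold sMul
  rw [Polynomial.sum_C_index]
  · have : ((1 : K ≃+* K) : K →+* K) = RingHom.id K := rfl
    simp [this]
  · simp

lemma coeff_sMul_top {K : Type} [Field K] (σ : K ≃+* K) (q f : K[X]) (m : ℕ)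
    (h1 : f.coeff m = 1) (h0 : ∀ k, m < k → f.coeff k = 0) (hq : q ≠ 0) :
    (sMul σ q f).coeff (q.natDegree + m) = q.leadingCoeff := by
  unfold sMul
  rw [Polynomial.sum, finset_sum_coeff]
  rw [Finset.sum_eq_single_of_mem q.natDegree (natDegree_mem_support_of_nonzero hq)]
  · rw [coeff_mul_X_pow', if_pos (Nat.le_add_right _ _), coeff_C_mul, coeff_map,
      Nat.add_sub_cancel_left, h1, map_one, mul_one, leadingCoeff]
  · intro j hj hne
    have hjle : j ≤ q.natDegree := le_natDegree_of_mem_supp j hj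
    have hjlt : j < q.natDegree := lt_of_le_of_ne hjle hne
    rw [coeff_mul_X_pow', if_pos (by omega), coeff_C_mul,
      coeff_map, h0, map_zero, mul_zero]
    omega

section FCoeff
variable {K : Type} [Field K] (m : ℕ) (a : ℕ → K)

lemma fcoeff_lt (k : ℕ) (hk : k < m) :
    (X ^ m - ∑ i ∈ Finset.range m, C (a i) * X ^ i : K[X]).coeff k = -(a k) := by
  rw [coeff_sub, coeff_X_pow, if_neg (by omega), finset_sum_coeff]
  simp only [coeff_C_mul_X_pow]
  rw [Finset.sum_ite_eq (Finset.range m) k, if_pos (Finset.mem_range.mpr hk)]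
  ring

lemma fcoeff_self :
    (X ^ m - ∑ i ∈ Finset.range m, C (a i) * X ^ i : K[X]).coeff m = 1 := by
  rw [coeff_sub, coeff_X_pow, if_pos rfl, finset_sum_coeff]
  simp only [coeff_C_mul_X_pow]
  rw [Finset.sum_ite_eq (Finset.range m) m, if_neg (by simp)]
  ring

lemma fcoeff_gt (k : ℕ) (hk : m < k) :
    (X ^ m - ∑ i ∈ Finset.range m, C (a i) * X ^ i : K[X]).coeff k = 0 := by
  rw [coeff_sub, coeff_X_pow, if_neg (by omega), finset_sum_coeff]
  simp only [coeff_C_mul_X_pow]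
  rw [Finset.sum_ite_eq (Finset.range m) k, if_neg (by simp; omega)]
  ring

lemma fdeg : (X ^ m - ∑ i ∈ Finset.range m, C (a i) * X ^ i : K[X]).degree = m := by
  apply le_antisymm
  · rw [degree_le_iff_coeff_zero]
    intro k hk
    rcases lt_or_ge (m : WithBot ℕ) k with h | h
    · exact fcoeff_gt m a k (by exact_mod_cast h)
    · exact absurd (lt_of_lt_of_le hk h) (lt_irrefl _)
  · apply le_degree_of_ne_zero
    rw [fcoeff_self]
    exact one_ne_zero

/-- Characterization of the constants in the eigenring. -/
lemma eigen_iff (σ : K ≃+* K) (hm : 1 ≤ m) (d : K) :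
    InEigenring σ (X ^ m - ∑ i ∈ Finset.range m, C (a i) * X ^ i) (C d) ↔
      ∀ i < m, a i ≠ 0 → (σ ^ (m - i) : K ≃+* K) d = d := by
  set f : K[X] := X ^ m - ∑ i ∈ Finset.range m, C (a i) * X ^ i with hfdef
  have h1 : f.coeff m = 1 := fcoeff_self m a
  have h0 : ∀ k, m < k → f.coeff k = 0 := fun k hk => fcoeff_gt m a k hk
  constructor
  · rintro ⟨-, q, hq⟩ i hi hai
    by_cases hd : d = 0
    · simp [hd]
    -- q ≠ 0
    have hq0 : q ≠ 0 := by
      rintro rfl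
      have h := congrArg (fun P => P.coeff m) hq
      simp only [coeff_sMul_C] at h
      rw [h1, one_mul] at h
      have hz : sMul σ (0 : K[X]) f = 0 := by
        unfold sMul; exact Polynomial.sum_zero_index _
      rw [hz, coeff_zero] at h
      exact hd ((σ ^ m : K ≃+* K).injective (by simpa using h))
    -- q has degree 0
    have hn0 : q.natDegree = 0 := by
      by_contra hn
      have h := congrArg (fun P => P.coeff (q.natDegree + m)) hq
      simp only [coeff_sMul_C] at h
      rw [h0 _ (by omega), zero_mul,
        coeff_sMul_top σ q f m h1 h0 hq0] at h
      exact hq0 (leadingCoeff_eq_zero.mp h.symm)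
    obtain ⟨c, hc⟩ : ∃ c, q = C c := ⟨q.coeff 0, (Polynomial.eq_C_of_natDegree_eq_zero hn0)⟩
    subst hc
    rw [sMul_C_left] at hq
    have hcm : (σ ^ m : K ≃+* K) d = c := by
      have h := congrArg (fun P => P.coeff m) hq
      simp only [coeff_sMul_C, coeff_C_mul, h1, one_mul, mul_one] at h
      exact h
    have hci : (σ ^ i : K ≃+* K) d = c := by
      have h := congrArg (fun P => P.coeff i) hq
      simp only [coeff_sMul_C, coeff_C_mul] at h
      rw [fcoeff_lt m a i hi] at h
      have h' : (-(a i)) * (σ ^ i : K ≃+* K) d = (-(a i)) * c := by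
        rw [h]; ring
      exact mul_left_cancel₀ (neg_ne_zero.mpr hai) h'
    have key : (σ ^ i : K ≃+* K) ((σ ^ (m - i) : K ≃+* K) d) = (σ ^ i : K ≃+* K) d := by
      have : (σ ^ i : K ≃+* K) * (σ ^ (m - i)) = σ ^ m := by
        rw [← pow_add]; congr 1; omega
      calc (σ ^ i : K ≃+* K) ((σ ^ (m - i) : K ≃+* K) d)
          = ((σ ^ i : K ≃+* K) * (σ ^ (m - i))) d := rfl
        _ = (σ ^ m : K ≃+* K) d := by rw [this]
        _ = (σ ^ i : K ≃+* K) d := by rw [hcm, hci]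
    exact (σ ^ i : K ≃+* K).injective key
  · intro h
    refine ⟨?_, C ((σ ^ m : K ≃+* K) d), ?_⟩
    · rw [hfdef, fdeg m a]
      refine lt_of_le_of_lt degree_C_le ?_
      exact_mod_cast hm
    · rw [sMul_C_left]
      ext k
      rw [coeff_sMul_C, coeff_C_mul]
      rcases lt_trichotomy k m with hk | hk | hk
      · rw [fcoeff_lt m a k hk]
        by_cases hak : a k = 0
        · simp [hak]
        · have hfix := h k hk hak
          have : (σ ^ m : K ≃+* K) d = (σ ^ k : K ≃+* K) d := by
            have hmul : (σ ^ k : K ≃+* K) * (σ ^ (m - k)) = σ ^ m := by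
              rw [← pow_add]; congr 1; omega
            calc (σ ^ m : K ≃+* K) d
                = ((σ ^ k : K ≃+* K) * (σ ^ (m - k))) d := by rw [hmul]
              _ = (σ ^ k : K ≃+* K) ((σ ^ (m - k) : K ≃+* K) d) := rfl
              _ = (σ ^ k : K ≃+* K) d := by rw [hfix]
          rw [this]; ring
      · subst hk; rw [h1, one_mul, mul_one]
      · rw [h0 k hk, zero_mul, mul_zero]
end FCoeff

/-- Corollary 2.6: let `K/F` be cyclic Galois of prime degree `p` with Galois group
`⟨σ⟩` and `f(t) = t^m - Σ a_i t^i ∈ K[t;σ]` not right invariant. Then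
`Nuc(S_f) = K` iff `p ∣ m - λ` for every nonzero coefficient index `λ`;
equivalently, `Nuc(S_f) = F` iff some nonzero coefficient index `λ` has
`p ∤ m - λ`. -/
theorem nucleus_prime_degree (F K : Type) [Field F] [Field K] [Algebra F K]
    [IsGalois F K] [FiniteDimensional F K]
    (p : ℕ) (hp : p.Prime) (hn : Module.finrank F K = p)
    (σ : K ≃ₐ[F] K) (hgen : ∀ τ : K ≃ₐ[F] K, τ ∈ Subgroup.zpowers σ)
    (σr : K ≃+* K) (hσr : ∀ x, σr x = σ x)
    (m : ℕ) (hm : 2 ≤ m) (a : ℕ → K) (f : K[X])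
    (hf : f = X ^ m - ∑ i ∈ Finset.range m, C (a i) * X ^ i)
    (hri : ¬ RightInvariant σr f) :
    ({d : K | InEigenring σr f (C d)} = Set.univ ↔
        ∀ i < m, a i ≠ 0 → p ∣ (m - i)) ∧
      ({d : K | InEigenring σr f (C d)} = ((⊥ : IntermediateField F K) : Set K) ↔
        ∃ i < m, a i ≠ 0 ∧ ¬ p ∣ (m - i)) := by
  subst hf
  -- the eigenring constants
  have hS : {d : K | InEigenring σr (X ^ m - ∑ i ∈ Finset.range m, C (a i) * X ^ i) (C d)}
      = {d : K | ∀ i < m, a i ≠ 0 → (σr ^ (m - i) : K ≃+* K) d = d} := by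
    ext d; exact eigen_iff m a σr (by omega) d
  rw [hS]
  -- group-theoretic facts
  have hcard : Nat.card (K ≃ₐ[F] K) = p := by
    rw [IsGalois.card_aut_eq_finrank, hn]
  have htop : Subgroup.zpowers σ = ⊤ := (Subgroup.eq_top_iff' _).mpr hgen
  have horder : orderOf σ = p := by
    rw [← Nat.card_zpowers, htop, ← hcard]
    exact Nat.card_congr Subgroup.topEquiv.toEquiv
  have hσr_pow : ∀ (j : ℕ) (x : K), (σr ^ j) x = (σ ^ j) x := by
    intro j
    induction j with
    | zero => intro x; rfl
    | succ n ih =>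
      intro x
      have h1 : (σr ^ (n + 1)) x = (σr ^ n) (σr x) := by
        rw [pow_succ]; rfl
      have h2 : (σ ^ (n + 1)) x = (σ ^ n) (σ x) := by
        rw [pow_succ]; rfl
      rw [h1, h2, hσr, ih]
  have hpow_id : ∀ j : ℕ, p ∣ j → ∀ x : K, (σr ^ j) x = x := by
    intro j hj x
    rw [hσr_pow]
    have : σ ^ j = 1 := orderOf_dvd_iff_pow_eq_one.mp (horder ▸ hj)
    rw [this]; rfl
  -- fixed field facts
  have hbotfix : (⊥ : IntermediateField F K)
      = IntermediateField.fixedField (⊤ : Subgroup (K ≃ₐ[F] K)) :=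
    by
    have h := ((IsGalois.tfae (F := F) (E := K)).out 0 1).mp (by infer_instance)
    exact h.symm
  have hmem_bot : ∀ x : K, x ∈ (⊥ : IntermediateField F K) ↔ ∀ τ : K ≃ₐ[F] K, τ x = x := by
    intro x
    rw [hbotfix]
    constructor
    · intro hx τ
      exact hx ⟨τ, trivial⟩
    · intro hx g
      exact hx g.1
  have hpow_ne : ∀ j : ℕ, ¬ p ∣ j → ∀ d : K, (σr ^ j) d = d →
      d ∈ (⊥ : IntermediateField F K) := by
    intro j hj d hd
    have hσj : (σ ^ j) d = d := by rw [← hσr_pow]; exact hd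
    have hne1 : σ ^ j ≠ 1 := by
      intro h
      exact hj (horder ▸ orderOf_dvd_iff_pow_eq_one.mpr h)
    -- subgroup of automorphisms fixing d
    let H : Subgroup (K ≃ₐ[F] K) :=
      { carrier := {τ | τ d = d}
        one_mem' := rfl
        mul_mem' := by
          intro x y hx hy
          show (x * y) d = d
          rw [AlgEquiv.mul_apply, hy, hx]
        inv_mem' := by
          intro x hx
          show x⁻¹ d = d
          have : x⁻¹ (x d) = d := x.symm_apply_apply d
          rw [hx] at this
          exact this }
    have hmemH : σ ^ j ∈ H := hσj
    have hHtop : H = ⊤ := by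
      have hle : Subgroup.zpowers (σ ^ j) ≤ H := Subgroup.zpowers_le.mpr hmemH
      have hordj : orderOf (σ ^ j) = p := by
        have hdvd : orderOf (σ ^ j) ∣ p := by
          rw [← hcard]; exact orderOf_dvd_natCard _
        rcases (Nat.Prime.eq_one_or_self_of_dvd hp _ hdvd) with h | h
        · exact absurd (orderOf_eq_one_iff.mp h) hne1
        · exact h
      have hzp : Subgroup.zpowers (σ ^ j) = ⊤ := by
        apply Subgroup.eq_top_of_card_eq
        rw [Nat.card_zpowers, hordj, hcard]
      rw [hzp] at hle
      exact top_le_iff.mp hle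
    rw [hmem_bot]
    intro τ
    have : τ ∈ H := hHtop ▸ Subgroup.mem_top τ
    exact this
  have hbot_subset : ∀ d : K, d ∈ (⊥ : IntermediateField F K) →
      ∀ j : ℕ, (σr ^ j) d = d := by
    intro d hd j
    rw [hσr_pow]
    induction j with
    | zero => rfl
    | succ n ih =>
      have h2 : (σ ^ (n + 1)) d = σ ((σ ^ n) d) := by rw [pow_succ']; rfl
      rw [h2, ih]
      obtain ⟨y, rfl⟩ := IntermediateField.mem_bot.mp hd
      exact σ.commutes y
  constructor
  · -- first equivalence
    constructor
    · intro hset i hi hai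
      by_contra hnd
      have hne1 : σ ^ (m - i) ≠ 1 := by
        intro h
        exact hnd (horder ▸ orderOf_dvd_iff_pow_eq_one.mpr h)
      obtain ⟨d, hd⟩ := DFunLike.ne_iff.mp hne1
      have : (σr ^ (m - i)) d = d := by
        have hdu : d ∈ {d : K | ∀ i < m, a i ≠ 0 → (σr ^ (m - i) : K ≃+* K) d = d} := by
          rw [hset]; trivial
        exact hdu i hi hai
      rw [hσr_pow] at this
      exact hd this
    · intro h
      ext d
      simp only [Set.mem_setOf_eq, Set.mem_univ, iff_true]
      intro i hi hai
      exact hpow_id _ (h i hi hai) d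
  · -- second equivalence
    constructor
    · intro hset
      by_contra hne
      push_neg at hne
      have hall : ∀ i < m, a i ≠ 0 → p ∣ (m - i) := fun i hi hai => hne i hi hai
      -- then the set is everything, so ⊥ = ⊤
      have huniv : ((⊥ : IntermediateField F K) : Set K) = Set.univ := by
        rw [← hset]
        ext d
        simp only [Set.mem_setOf_eq, Set.mem_univ, iff_true]
        intro i hi hai
        exact hpow_id _ (hall i hi hai) d
      have hbot_top : (⊥ : IntermediateField F K) = ⊤ := by
        apply IntermediateField.toSubalgebra_injective
        apply Subalgebra.toSubmodule.injective
        apply SetLike.coe_injective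
        show ((⊥ : IntermediateField F K) : Set K) = ((⊤ : IntermediateField F K) : Set K)
        rw [huniv]
        ext x; simp
      have h1 : Module.finrank (⊥ : IntermediateField F K) K = p := by
        rw [IntermediateField.finrank_bot', hn]
      rw [hbot_top, IntermediateField.finrank_top] at h1
      have hp2 := hp.two_le
      omega
    · rintro ⟨i, hi, hai, hnd⟩
      ext d
      simp only [Set.mem_setOf_eq, SetLike.mem_coe]
      constructor
      · intro h
        exact hpow_ne (m - i) hnd d (h i hi hai)
      · intro hd j hj haj
        exact hbot_subset d hd (m - j)
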